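/- Any mechanism mapping utility profiles to maximizers of the Nash bargaining program is 2-incentive compatible: if profiles u and û differ only in agent l's utilities, x maximizes Π_i u_i·x_i and y maximizes Π_i û_i·y_i over fractional perfect matchings, then u_l·y_l ≤ 2·u_l·x_l. -/

import Mathlib

def isPM {n : ℕ} (x : Fin n → Fin n → ℝ) : Prop :=
  (∀ i j, 0 ≤ x i j) ∧ (∀ i, ∑ j, x i j = 1) ∧ (∀ j, ∑ i, x i j = 1)

def util {n : ℕ} (u x : Fin n → Fin n → ℝ) (i : Fin n) : ℝ := ∑ j, u i j * x i j

lemma slope_nonpos {g : ℝ → ℝ} {S : ℝ} (hd : HasDerivAt g S 0) (hg0 : g 0 = 1)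
    (hle : ∀ ε ∈ Set.Ioc (0:ℝ) 1, g ε ≤ 1) : S ≤ 0 := by
  have h := hasDerivAt_iff_tendsto_slope.mp hd
  have h2 : Filter.Tendsto (slope g 0) (nhdsWithin 0 (Set.Ioi 0)) (nhds S) :=
    h.mono_left (nhdsWithin_mono _ (fun x hx => ne_of_gt hx))
  refine le_of_tendsto h2 ?_
  filter_upwards [Ioo_mem_nhdsGT_of_mem (by norm_num : (0:ℝ) ∈ Set.Ico 0 1)] with ε hε
  have hge := hle ε ⟨hε.1, le_of_lt hε.2⟩
  rw [slope_def_field]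
  have : g ε - g 0 ≤ 0 := by rw [hg0]; linarith
  have hεpos : 0 < ε - 0 := by simpa using hε.1
  exact div_nonpos_iff.2 (Or.inr ⟨this, le_of_lt hεpos⟩)

/-- first-order condition -/
lemma foc {n : ℕ} (u : Fin n → Fin n → ℝ)
    (x y : Fin n → Fin n → ℝ) (hx : isPM x) (hy : isPM y)
    (hposx : ∀ i, 0 < util u x i)
    (hmaxx : ∀ z, isPM z → ∏ i, util u z i ≤ ∏ i, util u x i) :
    ∑ i, util u y i / util u x i ≤ n := by
  set b : Fin n → ℝ := fun i => util u y i / util u x i - 1 with hb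
  set g : ℝ → ℝ := fun ε => ∏ i, (1 + ε * b i) with hgdef
  have hg0 : g 0 = 1 := by simp [hgdef]
  have hd : HasDerivAt g (∑ i, b i) 0 := by
    have : HasDerivAt g (∑ i : Fin n, (∏ j ∈ Finset.univ.erase i, (1 + (0:ℝ) * b j)) • b i) 0 := by
      apply HasDerivAt.fun_finsetProd
      intro i _
      simpa [mul_comm] using ((hasDerivAt_id (0:ℝ)).const_mul (b i)).const_add 1
    simpa using this
  have hle : ∀ ε ∈ Set.Ioc (0:ℝ) 1, g ε ≤ 1 := by
    intro ε hε
    set z : Fin n → Fin n → ℝ := fun i j => (1 - ε) * x i j + ε * y i j with hz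
    have hzPM : isPM z := by
      refine ⟨fun i j => ?_, fun i => ?_, fun j => ?_⟩
      · have hxn := hx.1 i j
        have hyn := hy.1 i j
        have h1 : (0:ℝ) ≤ 1 - ε := by linarith [hε.2]
        exact add_nonneg (mul_nonneg h1 hxn) (mul_nonneg hε.1.le hyn)
      · simp [hz, Finset.sum_add_distrib, ← Finset.mul_sum, hx.2.1 i, hy.2.1 i]
      · simp [hz, Finset.sum_add_distrib, ← Finset.mul_sum, hx.2.2 j, hy.2.2 j]
    have hulin : ∀ i, util u z i = util u x i * (1 + ε * b i) := by
      intro i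
      have hxne : util u x i ≠ 0 := ne_of_gt (hposx i)
      have : util u z i = (1 - ε) * util u x i + ε * util u y i := by
        simp [util, hz, mul_add, Finset.sum_add_distrib, Finset.mul_sum]
        ring_nf
        rw [add_comm]; congr 1 <;> exact Finset.sum_congr rfl fun j _ => by ring
      rw [this, hb]
      field_simp
      ring
    have hmax := hmaxx z hzPM
    have hprod : ∏ i, util u z i = (∏ i, util u x i) * g ε := by
      rw [hgdef]
      rw [← Finset.prod_mul_distrib]
      exact Finset.prod_congr rfl fun i _ => hulin i
    rw [hprod] at hmax
    have hP : 0 < ∏ i, util u x i := Finset.prod_pos fun i _ => hposx i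
    nlinarith
  have hS := slope_nonpos hd hg0 hle
  have : ∑ i, (util u y i / util u x i - 1) ≤ 0 := hS
  rw [Finset.sum_sub_distrib] at this
  simp at this
  linarith

/-- any mechanism outputting maximizers of the Nash bargaining program
is 2-incentive compatible: if profiles u and û differ only in agent l, x maximizes
the Nash product under u and y under û, then u_l·y_l ≤ 2·u_l·x_l. -/
theorem nash_two_ic {n : ℕ} (u uhat : Fin n → Fin n → ℝ)
    (hu : ∀ i j, 0 ≤ u i j) (huhat : ∀ i j, 0 ≤ uhat i j)
    (l : Fin n) (hdiff : ∀ i, i ≠ l → uhat i = u i)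
    (x y : Fin n → Fin n → ℝ) (hx : isPM x) (hy : isPM y)
    (hposx : ∀ i, 0 < util u x i) (hposy : ∀ i, 0 < util uhat y i)
    (hmaxx : ∀ z, isPM z → ∏ i, util u z i ≤ ∏ i, util u x i)
    (hmaxy : ∀ z, isPM z → ∏ i, util uhat z i ≤ ∏ i, util uhat y i) :
    util u y l ≤ 2 * util u x l := by
  have h1 := foc u x y hx hy hposx hmaxx
  have h2 := foc uhat y x hy hx hposy hmaxy
  set A : Fin n → ℝ := fun i => util u y i / util u x i with hA
  set B : Fin n → ℝ := fun i => util uhat x i / util uhat y i with hB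
  have hlmem : l ∈ Finset.univ := Finset.mem_univ l
  have hsplitA : A l + ∑ i ∈ Finset.univ.erase l, A i = ∑ i, A i :=
    Finset.add_sum_erase _ A hlmem
  have hsplitB : B l + ∑ i ∈ Finset.univ.erase l, B i = ∑ i, B i :=
    Finset.add_sum_erase _ B hlmem
  have hpair : ∀ i ∈ Finset.univ.erase l, 2 ≤ A i + B i := by
    intro i hi
    have hne : i ≠ l := (Finset.mem_erase.mp hi).1
    have heq : uhat i = u i := hdiff i hne
    have hXi : 0 < util u x i := hposx i
    have hYi : 0 < util u y i := by
      have := hposy i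
      simpa [util, heq] using this
    have hBi : B i = util u x i / util u y i := by
      simp [hB, util, heq]
    rw [hBi, hA]
    rw [div_add_div _ _ (ne_of_gt hXi) (ne_of_gt hYi), le_div_iff₀ (mul_pos hXi hYi)]
    nlinarith [sq_nonneg (util u y i - util u x i)]
  have hcard : (Finset.univ.erase l).card = n - 1 := by
    simp [Finset.card_erase_of_mem hlmem]
  have hn1 : 1 ≤ n := Nat.one_le_iff_ne_zero.mpr (by rintro rfl; exact absurd l.2 (by simp))
  have hsum : ((n : ℝ) - 1) * 2 ≤ ∑ i ∈ Finset.univ.erase l, (A i + B i) := by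
    have := Finset.card_nsmul_le_sum (Finset.univ.erase l) (fun i => A i + B i) 2 hpair
    rw [nsmul_eq_mul, hcard] at this
    rwa [Nat.cast_sub hn1, Nat.cast_one] at this
  have hBl : 0 ≤ B l := by
    apply div_nonneg _ (le_of_lt (hposy l))
    exact Finset.sum_nonneg fun j _ => mul_nonneg (huhat l j) (hx.1 l j)
  have hAl : A l ≤ 2 := by
    have := Finset.sum_add_distrib (s := Finset.univ.erase l) (f := A) (g := B)
    rw [Finset.sum_add_distrib] at hsum
    linarith
  have hXl : 0 < util u x l := hposx l
  have : util u y l = A l * util u x l := by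
    rw [hA]; field_simp
  rw [this]
  nlinarith
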